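/- In the weak commutativity group χ(G), the subgroup L₁₂ = ⁅L₁,L₂⁆ is contained in R = ⁅⁅G₁,L⁆,G₂⁆. -/

import Mathlib

open Subgroup

/-- The weak commutativity relations inside the free product `G ∗ G`. -/
def chiRel (G : Type*) [Group G] : Subgroup (Monoid.Coprod G G) :=
  Subgroup.normalClosure
    {x | ∃ g : G, x = Monoid.Coprod.inl g * Monoid.Coprod.inr g *
      (Monoid.Coprod.inl g)⁻¹ * (Monoid.Coprod.inr g)⁻¹}

instance chiRel_normal (G : Type*) [Group G] : (chiRel G).Normal :=
  Subgroup.normalClosure_normal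

/-- The weak commutativity group `χ(G)`. -/
def Chi (G : Type*) [Group G] : Type _ := Monoid.Coprod G G ⧸ chiRel G

instance (G : Type*) [Group G] : Group (Chi G) :=
  inferInstanceAs (Group (Monoid.Coprod G G ⧸ chiRel G))

/-- The canonical map `G → χ(G)`, `g ↦ g`. -/
def chiIota1 (G : Type*) [Group G] : G →* Chi G :=
  (QuotientGroup.mk' (chiRel G)).comp Monoid.Coprod.inl

/-- The canonical map `G → χ(G)`, `g ↦ g^φ`. -/
def chiIota2 (G : Type*) [Group G] : G →* Chi G :=
  (QuotientGroup.mk' (chiRel G)).comp Monoid.Coprod.inr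

/-- `G₁ ≤ χ(G)`. -/
def chiG1 (G : Type*) [Group G] : Subgroup (Chi G) := (chiIota1 G).range

/-- `G₂ = G^φ ≤ χ(G)`. -/
def chiG2 (G : Type*) [Group G] : Subgroup (Chi G) := (chiIota2 G).range

/-- `L = ⟨g⁻¹ g^φ : g ∈ G⟩`. -/
def chiL (G : Type*) [Group G] : Subgroup (Chi G) :=
  Subgroup.closure {x | ∃ g : G, x = (chiIota1 G g)⁻¹ * chiIota2 G g}

/-- `D = ⁅G₁, G₂⁆`. -/
def chiD (G : Type*) [Group G] : Subgroup (Chi G) := ⁅chiG1 G, chiG2 G⁆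

/-- `L₁ = ⁅L, G₁⁆`. -/
def chiL1 (G : Type*) [Group G] : Subgroup (Chi G) := ⁅chiL G, chiG1 G⁆

/-- `L₂ = ⁅L, G₂⁆`. -/
def chiL2 (G : Type*) [Group G] : Subgroup (Chi G) := ⁅chiL G, chiG2 G⁆

/-- `R = ⁅⁅G₁, L⁆, G₂⁆`. -/
def chiR (G : Type*) [Group G] : Subgroup (Chi G) := ⁅⁅chiG1 G, chiL G⁆, chiG2 G⁆

/-- `L₁₂ = ⁅L₁, L₂⁆`. -/
def chiL12 (G : Type*) [Group G] : Subgroup (Chi G) := ⁅chiL1 G, chiL2 G⁆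

namespace ChiProof

open scoped commutatorElement

variable {G : Type*} [Group G]

local notation "i1" => chiIota1 G
local notation "i2" => chiIota2 G

/-- The basic relation: `g` commutes with `g^φ` in `χ(G)`. -/
lemma comm_rel (g : G) : Commute (i1 g) (i2 g) := by
  have hmem : (Monoid.Coprod.inl g * Monoid.Coprod.inr g *
      (Monoid.Coprod.inl g)⁻¹ * (Monoid.Coprod.inr g)⁻¹ : Monoid.Coprod G G) ∈ chiRel G :=
    Subgroup.subset_normalClosure ⟨g, rfl⟩
  have h1 : (QuotientGroup.mk' (chiRel G)) (Monoid.Coprod.inl g * Monoid.Coprod.inr g *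
      (Monoid.Coprod.inl g)⁻¹ * (Monoid.Coprod.inr g)⁻¹) = 1 :=
    (QuotientGroup.eq_one_iff _).mpr hmem
  simp only [map_mul, map_inv] at h1
  have h2 : (i1 g) * (i2 g) * (i1 g)⁻¹ * (i2 g)⁻¹ = 1 := h1
  rw [Commute, SemiconjBy]
  calc i1 g * i2 g = ((i1 g) * (i2 g) * (i1 g)⁻¹ * (i2 g)⁻¹) * (i2 g * i1 g) := by group
  _ = i2 g * i1 g := by rw [h2]; group

/-- The mirror identity `⁅g^φ, h⁆ = ⁅g, h^φ⁆`. -/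
lemma mirror (g h : G) : ⁅i2 g, i1 h⁆ = ⁅i1 g, i2 h⁆ := by
  set a := i1 g with ha
  set x := i2 g with hx
  set b := i1 h with hb
  set y := i2 h with hy
  have e1 : a * x = x * a := comm_rel g
  have e2 : b * y = y * b := comm_rel h
  have e3 : a⁻¹ * b * (x⁻¹ * y) = x⁻¹ * y * (a⁻¹ * b) := by
    have := (comm_rel (g⁻¹ * h)).eq
    simp only [map_mul, map_inv, ← ha, ← hx, ← hb, ← hy] at this
    calc a⁻¹ * b * (x⁻¹ * y) = (a⁻¹ * b) * (x⁻¹ * y) := by group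
    _ = (x⁻¹ * y) * (a⁻¹ * b) := this
    _ = x⁻¹ * y * (a⁻¹ * b) := by group
  have e1' : a * x⁻¹ = x⁻¹ * a := (Commute.inv_right e1).eq
  have e2' : b * y⁻¹ = y⁻¹ * b := (Commute.inv_right e2).eq
  have h4 : x * b * x⁻¹ * y = a * y * a⁻¹ * b := by
    calc x * b * x⁻¹ * y = x * a * (a⁻¹ * b * (x⁻¹ * y)) := by group
    _ = x * a * (x⁻¹ * y * (a⁻¹ * b)) := by rw [e3]
    _ = x * (a * x⁻¹) * y * a⁻¹ * b := by group
    _ = x * (x⁻¹ * a) * y * a⁻¹ * b := by rw [e1']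
    _ = a * y * a⁻¹ * b := by group
  show x * b * x⁻¹ * b⁻¹ = a * y * a⁻¹ * y⁻¹
  calc x * b * x⁻¹ * b⁻¹ = (x * b * x⁻¹ * y) * y⁻¹ * b⁻¹ := by group
  _ = (a * y * a⁻¹ * b) * y⁻¹ * b⁻¹ := by rw [h4]
  _ = a * y * a⁻¹ * (b * y⁻¹) * b⁻¹ := by group
  _ = a * y * a⁻¹ * (y⁻¹ * b) * b⁻¹ := by rw [e2']
  _ = a * y * a⁻¹ * y⁻¹ := by group

/-- commutator expansion in the left slot -/
lemma exp_left (p q r : Chi G) : ⁅p * q, r⁆ = p * ⁅q, r⁆ * p⁻¹ * ⁅p, r⁆ := by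
  simp only [commutatorElement_def]
  group

/-- commutator expansion in the right slot -/
lemma exp_right (p q r : Chi G) : ⁅p, q * r⁆ = ⁅p, q⁆ * (q * ⁅p, r⁆ * q⁻¹) := by
  simp only [commutatorElement_def]
  group

/-- Each generator of `L` commutes with each generator of `D`. -/
lemma l_comm_d (g w h : G) : Commute ((i1 g)⁻¹ * i2 g) ⁅i1 w, i2 h⁆ := by
  set d := ⁅i1 w, i2 h⁆ with hd
  have key : i2 g * d * (i2 g)⁻¹ = i1 g * d * (i1 g)⁻¹ := by
    have E1 : ⁅i2 (g * w), i1 h⁆ = i2 g * ⁅i2 w, i1 h⁆ * (i2 g)⁻¹ * ⁅i2 g, i1 h⁆ := by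
      rw [map_mul]; exact exp_left _ _ _
    have E2 : ⁅i1 (g * w), i2 h⁆ = i1 g * ⁅i1 w, i2 h⁆ * (i1 g)⁻¹ * ⁅i1 g, i2 h⁆ := by
      rw [map_mul]; exact exp_left _ _ _
    have E3 : i2 g * ⁅i2 w, i1 h⁆ * (i2 g)⁻¹ * ⁅i2 g, i1 h⁆
        = i1 g * ⁅i1 w, i2 h⁆ * (i1 g)⁻¹ * ⁅i1 g, i2 h⁆ := by
      rw [← E1, ← E2, mirror]
    rw [mirror w h] at E3
    rw [mirror g h] at E3
    exact mul_right_cancel E3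
  rw [Commute, SemiconjBy]
  calc (i1 g)⁻¹ * i2 g * d = (i1 g)⁻¹ * (i2 g * d * (i2 g)⁻¹) * (i2 g) := by group
  _ = (i1 g)⁻¹ * (i1 g * d * (i1 g)⁻¹) * (i2 g) := by rw [key]
  _ = d * ((i1 g)⁻¹ * i2 g) := by group

/-- Every element of `L` commutes with each `D`-generator. -/
lemma mem_L_comm {x : Chi G} (hx : x ∈ chiL G) (w h : G) : Commute x ⁅i1 w, i2 h⁆ := by
  refine Subgroup.closure_induction (p := fun z _ => Commute z ⁅i1 w, i2 h⁆) ?_ ?_ ?_ ?_ hx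
  · rintro z ⟨g, rfl⟩
    exact l_comm_d g w h
  · exact Commute.one_left _
  · intro p q _ _ hp hq; exact hp.mul_left hq
  · intro p _ hp; exact hp.inv_left

/-- Every element of `L` commutes with every element of `D`. -/
lemma L_comm_D {x δ : Chi G} (hx : x ∈ chiL G) (hδ : δ ∈ chiD G) : Commute x δ := by
  have hle : chiD G ≤ Subgroup.centralizer {x} := by
    rw [chiD, Subgroup.commutator_le]
    rintro p ⟨w, rfl⟩ q ⟨h, rfl⟩
    rw [Subgroup.mem_centralizer_iff]
    rintro y hy
    rcases Set.mem_singleton_iff.mp hy with rfl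
    exact (mem_L_comm hx w h).eq
  have := hle hδ
  rw [Subgroup.mem_centralizer_iff] at this
  exact this x rfl

lemma G1_sup_G2 : chiG1 G ⊔ chiG2 G = (⊤ : Subgroup (Chi G)) := by
  rw [eq_top_iff]
  rintro x -
  obtain ⟨y, rfl⟩ := QuotientGroup.mk'_surjective (chiRel G) x
  induction y using Monoid.Coprod.induction_on with
  | inl g => exact Subgroup.mem_sup_left (⟨g, rfl⟩ : (QuotientGroup.mk' (chiRel G))
      (Monoid.Coprod.inl g) ∈ chiG1 G)
  | inr g => exact Subgroup.mem_sup_right (⟨g, rfl⟩ : (QuotientGroup.mk' (chiRel G))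
      (Monoid.Coprod.inr g) ∈ chiG2 G)
  | mul p q hp hq =>
      rw [map_mul]
      exact mul_mem hp hq

lemma L_sup_G1 : chiL G ⊔ chiG1 G = (⊤ : Subgroup (Chi G)) := by
  rw [eq_top_iff, ← G1_sup_G2]
  refine sup_le le_sup_right ?_
  rintro p ⟨g, rfl⟩
  have : i2 g = (i1 g) * ((i1 g)⁻¹ * i2 g) := by group
  rw [this]
  exact mul_mem (Subgroup.mem_sup_right (⟨g, rfl⟩ : i1 g ∈ chiG1 G))
    (Subgroup.mem_sup_left (Subgroup.subset_closure ⟨g, rfl⟩))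

/-- `H` and `K` both normalize `⁅H, K⁆`. -/
lemma sup_le_normalizer_commutator (H K : Subgroup (Chi G)) :
    H ⊔ K ≤ Subgroup.normalizer (⁅H, K⁆ : Subgroup (Chi G)) := by
  have conjL : ∀ t ∈ H, ∀ z ∈ (⁅H, K⁆ : Subgroup (Chi G)), t * z * t⁻¹ ∈ ⁅H, K⁆ := by
    intro t ht z hz
    rw [Subgroup.commutator_def] at hz
    refine Subgroup.closure_induction
      (p := fun z _ => t * z * t⁻¹ ∈ (⁅H, K⁆ : Subgroup (Chi G))) ?_ ?_ ?_ ?_ hz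
    · rintro z ⟨p, hp, q, hq, rfl⟩
      have hid : t * ⁅p, q⁆ * t⁻¹ = ⁅t * p, q⁆ * ⁅t, q⁆⁻¹ := by
        simp only [commutatorElement_def]; group
      rw [hid]
      exact mul_mem (Subgroup.commutator_mem_commutator (mul_mem ht hp) hq)
        (inv_mem (Subgroup.commutator_mem_commutator ht hq))
    · simpa using one_mem _
    · intro p q _ _ hp hq
      have : t * (p * q) * t⁻¹ = (t * p * t⁻¹) * (t * q * t⁻¹) := by group
      rw [this]; exact mul_mem hp hq
    · intro p _ hp
      have : t * p⁻¹ * t⁻¹ = (t * p * t⁻¹)⁻¹ := by group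
      rw [this]; exact inv_mem hp
  have conjR : ∀ t ∈ K, ∀ z ∈ (⁅H, K⁆ : Subgroup (Chi G)), t * z * t⁻¹ ∈ ⁅H, K⁆ := by
    intro t ht z hz
    rw [Subgroup.commutator_def] at hz
    refine Subgroup.closure_induction
      (p := fun z _ => t * z * t⁻¹ ∈ (⁅H, K⁆ : Subgroup (Chi G))) ?_ ?_ ?_ ?_ hz
    · rintro z ⟨p, hp, q, hq, rfl⟩
      have hid : t * ⁅p, q⁆ * t⁻¹ = ⁅p, t⁆⁻¹ * ⁅p, t * q⁆ := by
        simp only [commutatorElement_def]; group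
      rw [hid]
      exact mul_mem (inv_mem (Subgroup.commutator_mem_commutator hp ht))
        (Subgroup.commutator_mem_commutator hp (mul_mem ht hq))
    · simpa using one_mem _
    · intro p q _ _ hp hq
      have : t * (p * q) * t⁻¹ = (t * p * t⁻¹) * (t * q * t⁻¹) := by group
      rw [this]; exact mul_mem hp hq
    · intro p _ hp
      have : t * p⁻¹ * t⁻¹ = (t * p * t⁻¹)⁻¹ := by group
      rw [this]; exact inv_mem hp
  have main : ∀ t : Chi G, (t ∈ H ∨ t ∈ K) → t ∈ Subgroup.normalizer (⁅H, K⁆ : Subgroup (Chi G)) := by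
    intro t ht
    rw [Subgroup.mem_normalizer_iff]
    intro z
    constructor
    · intro hz
      rcases ht with h | h
      · exact conjL t h z hz
      · exact conjR t h z hz
    · intro hz
      have : z = t⁻¹ * (t * z * t⁻¹) * (t⁻¹)⁻¹ := by group
      rw [this]
      rcases ht with h | h
      · exact conjL t⁻¹ (inv_mem h) _ hz
      · exact conjR t⁻¹ (inv_mem h) _ hz
  exact sup_le (fun t ht => main t (Or.inl ht)) (fun t ht => main t (Or.inr ht))

lemma L1_normal : (chiL1 G).Normal := by
  rw [← Subgroup.normalizer_eq_top_iff, eq_top_iff, ← L_sup_G1]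
  exact sup_le_normalizer_commutator _ _

/-- `L` is stable under conjugation by `G₁`. -/
lemma conjG1_mem_L (k : G) {x : Chi G} (hx : x ∈ chiL G) :
    (i1 k) * x * (i1 k)⁻¹ ∈ chiL G := by
  refine Subgroup.closure_induction
    (p := fun z _ => (i1 k) * z * (i1 k)⁻¹ ∈ chiL G) ?_ ?_ ?_ ?_ hx
  · rintro z ⟨g, rfl⟩
    have hid : i1 k * ((i1 g)⁻¹ * i2 g) * (i1 k)⁻¹
        = ((i1 (g * k⁻¹))⁻¹ * i2 (g * k⁻¹)) * ((i1 k⁻¹)⁻¹ * i2 k⁻¹)⁻¹ := by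
      simp only [map_mul, map_inv]; group
    rw [hid]
    exact mul_mem (Subgroup.subset_closure ⟨g * k⁻¹, rfl⟩)
      (inv_mem (Subgroup.subset_closure ⟨k⁻¹, rfl⟩))
  · simpa using one_mem _
  · intro p q _ _ hp hq
    have : i1 k * (p * q) * (i1 k)⁻¹ = (i1 k * p * (i1 k)⁻¹) * (i1 k * q * (i1 k)⁻¹) := by group
    rw [this]; exact mul_mem hp hq
  · intro p _ hp
    have : i1 k * p⁻¹ * (i1 k)⁻¹ = (i1 k * p * (i1 k)⁻¹)⁻¹ := by group
    rw [this]; exact inv_mem hp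

lemma L1_le_L : chiL1 G ≤ chiL G := by
  rw [chiL1, Subgroup.commutator_le]
  rintro x hx p ⟨k, rfl⟩
  have hid : ⁅x, i1 k⁆ = x * (i1 k * x⁻¹ * (i1 k)⁻¹) := by
    simp only [commutatorElement_def]; group
  rw [hid]
  exact mul_mem hx (conjG1_mem_L k (inv_mem hx))

lemma chiR_eq : chiR G = ⁅chiL1 G, chiG2 G⁆ := by
  rw [chiR, chiL1, Subgroup.commutator_comm (chiG1 G) (chiL G)]

lemma R_normal : (chiR G).Normal := by
  have hL1 : (chiL1 G).Normal := L1_normal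
  have conj_half : ∀ t : Chi G, (∀ u ∈ chiL1 G, ∀ q ∈ chiG2 G, t * ⁅u, q⁆ * t⁻¹ ∈ chiR G) →
      ∀ z ∈ chiR G, t * z * t⁻¹ ∈ chiR G := by
    intro t ht z hz
    rw [chiR_eq, Subgroup.commutator_def] at hz
    refine Subgroup.closure_induction
      (p := fun z _ => t * z * t⁻¹ ∈ chiR G) ?_ ?_ ?_ ?_ hz
    · rintro z ⟨u, hu, q, hq, rfl⟩
      exact ht u hu q hq
    · simpa using one_mem _
    · intro p q _ _ hp hq
      have : t * (p * q) * t⁻¹ = (t * p * t⁻¹) * (t * q * t⁻¹) := by group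
      rw [this]; exact mul_mem hp hq
    · intro p _ hp
      have : t * p⁻¹ * t⁻¹ = (t * p * t⁻¹)⁻¹ := by group
      rw [this]; exact inv_mem hp
  -- conjugation by elements of G₂
  have hG2 : ∀ k : G, ∀ u ∈ chiL1 G, ∀ q ∈ chiG2 G, (i2 k) * ⁅u, q⁆ * (i2 k)⁻¹ ∈ chiR G := by
    intro k u hu q hq
    rw [conjugate_commutatorElement]
    rw [chiR_eq]
    exact Subgroup.commutator_mem_commutator (hL1.conj_mem u hu _)
      (mul_mem (mul_mem ⟨k, rfl⟩ hq) (inv_mem ⟨k, rfl⟩))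
  -- conjugation by elements of G₁
  have hG1 : ∀ k : G, ∀ u ∈ chiL1 G, ∀ q ∈ chiG2 G, (i1 k) * ⁅u, q⁆ * (i1 k)⁻¹ ∈ chiR G := by
    intro k u hu q hq
    set t := i1 k with htdef
    set u₁ := t * u * t⁻¹ with hu₁def
    have hu₁ : u₁ ∈ chiL1 G := hL1.conj_mem u hu t
    set δ := q⁻¹ * t * q * t⁻¹ with hδdef
    have hδD : δ ∈ chiD G := by
      have : δ = ⁅q⁻¹, t⁆ := by rw [hδdef]; simp only [commutatorElement_def]; group
      rw [this, chiD, Subgroup.commutator_comm]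
      exact Subgroup.commutator_mem_commutator (inv_mem hq) ⟨k, rfl⟩
    have hcomm : ⁅u₁, δ⁆ = 1 := by
      refine commutatorElement_eq_one_iff_commute.mpr ?_
      exact L_comm_D (L1_le_L hu₁) hδD
    have hconj : t * ⁅u, q⁆ * t⁻¹ = ⁅u₁, q * δ⁆ := by
      rw [conjugate_commutatorElement]
      congr 1
      rw [hδdef]; group
    rw [hconj, exp_right, hcomm]
    have : ⁅u₁, q⁆ * (q * 1 * q⁻¹) = ⁅u₁, q⁆ := by group
    rw [this, chiR_eq]
    exact Subgroup.commutator_mem_commutator hu₁ hq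
  rw [← Subgroup.normalizer_eq_top_iff, eq_top_iff, ← G1_sup_G2]
  have main : ∀ t : Chi G,
      (∀ z ∈ chiR G, t * z * t⁻¹ ∈ chiR G) → (∀ z ∈ chiR G, t⁻¹ * z * t ∈ chiR G) →
      t ∈ Subgroup.normalizer (chiR G) := by
    intro t h1 h2
    rw [Subgroup.mem_normalizer_iff]
    intro z
    constructor
    · exact h1 z
    · intro hz
      have : z = t⁻¹ * (t * z * t⁻¹) * t := by group
      rw [this]
      exact h2 _ hz
  refine sup_le ?_ ?_
  · rintro p ⟨k, rfl⟩
    refine main _ (conj_half _ (hG1 k)) ?_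
    have : (i1 k)⁻¹ = i1 k⁻¹ := by rw [map_inv]
    rw [this]
    exact fun z hz => by
      have := conj_half _ (hG1 k⁻¹) z hz
      simpa [map_inv] using this
  · rintro p ⟨k, rfl⟩
    refine main _ (conj_half _ (hG2 k)) ?_
    exact fun z hz => by
      have := conj_half _ (hG2 k⁻¹) z hz
      simpa [map_inv] using this

/-- The set of elements whose commutator with everything in `L₁` lies in `R`. -/
def Ctil (G : Type*) [Group G] : Subgroup (Chi G) where
  carrier := {w | ∀ u ∈ chiL1 G, ⁅u, w⁆ ∈ chiR G}
  one_mem' := by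
    intro u _
    simpa using one_mem (chiR G)
  mul_mem' := by
    intro w₁ w₂ h1 h2 u hu
    have hid : ⁅u, w₁ * w₂⁆ = ⁅u, w₁⁆ * (w₁ * ⁅u, w₂⁆ * w₁⁻¹) := exp_right u w₁ w₂
    rw [hid]
    exact mul_mem (h1 u hu) (R_normal.conj_mem _ (h2 u hu) w₁)
  inv_mem' := by
    intro w hw u hu
    have hid : ⁅u, w⁻¹⁆ = w⁻¹ * ⁅u, w⁆⁻¹ * (w⁻¹)⁻¹ := by
      simp only [commutatorElement_def]; group
    rw [hid]
    exact R_normal.conj_mem _ (inv_mem (hw u hu)) w⁻¹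

lemma Ctil_conj {w : Chi G} (hw : w ∈ Ctil G) (v : Chi G) : v * w * v⁻¹ ∈ Ctil G := by
  intro u hu
  have hid : ⁅u, v * w * v⁻¹⁆ = v * ⁅v⁻¹ * u * (v⁻¹)⁻¹, w⁆ * v⁻¹ := by
    simp only [commutatorElement_def]; group
  rw [hid]
  exact R_normal.conj_mem _ (hw _ (L1_normal.conj_mem u hu v⁻¹)) v

lemma G2_le_Ctil : chiG2 G ≤ Ctil G := by
  rintro p ⟨k, rfl⟩ u hu
  rw [chiR_eq]
  exact Subgroup.commutator_mem_commutator hu ⟨k, rfl⟩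

lemma L2_le_Ctil : chiL2 G ≤ Ctil G := by
  rw [chiL2, Subgroup.commutator_le]
  intro y _ q hq
  have hid : ⁅y, q⁆ = (y * q * y⁻¹) * q⁻¹ := by
    simp only [commutatorElement_def, mul_assoc]
  rw [hid]
  exact mul_mem (Ctil_conj (G2_le_Ctil hq) y) (inv_mem (G2_le_Ctil hq))

end ChiProof

theorem chiL12_le_chiR (G : Type*) [Group G] : chiL12 G ≤ chiR G := by
  rw [chiL12, Subgroup.commutator_le]
  intro u hu m hm
  exact ChiProof.L2_le_Ctil hm u hu
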